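/- Let V be a Q-algebra and let π₀, …, πₙ ∈ V be idempotents with π_r·π_s = 0 for all r < s. For each r set p_r := (1 − (1/2)πₙ) ⋯ (1 − (1/2)π_{r+1}) · π_r · (1 − (1/2)π_{r−1}) ⋯ (1 − (1/2)π₀). Then for every r one has π_r · p_r · π_r = π_r and p_r · π_r · p_r = p_r. -/
import Mathlib

lemma prod_fix_left {V : Type*} [Ring V] (x : V) (l : List V)
    (h : ∀ a ∈ l, x * a = x) : x * l.prod = x := by
  induction l with
  | nil => simp
  | cons a l ih =>
    rw [List.prod_cons, ← mul_assoc, h a (by simp),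
      ih (fun b hb => h b (by simp [hb]))]

lemma prod_fix_right {V : Type*} [Ring V] (x : V) (l : List V)
    (h : ∀ a ∈ l, a * x = x) : l.prod * x = x := by
  induction l with
  | nil => simp
  | cons a l ih =>
    rw [List.prod_cons, mul_assoc, ih (fun b hb => h b (by simp [hb])),
      h a (by simp)]

/-- `(1 - (1/2)πₙ) ⋯ (1 - (1/2)π_{r+1}) · π_r · (1 - (1/2)π_{r-1}) ⋯ (1 - (1/2)π₀)` -/
def gramSchmidtStep {V : Type*} [Ring V] [Algebra ℚ V] (n : ℕ) (π : ℕ → V) (i : ℕ) : V :=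
  (((List.range (n - i)).map (fun t => 1 - (2:ℚ)⁻¹ • π (n - t))).prod) * π i *
    (((List.range i).reverse.map (fun t => 1 - (2:ℚ)⁻¹ • π t)).prod)

theorem gram_schmidt_mutually_inverse {V : Type*} [Ring V] [Algebra ℚ V]
    (n : ℕ) (π : ℕ → V)
    (hidem : ∀ i ≤ n, π i * π i = π i)
    (horth : ∀ r ≤ n, ∀ s ≤ n, r < s → π r * π s = 0) :
    ∀ r ≤ n, π r * gramSchmidtStep n π r * π r = π r ∧
      gramSchmidtStep n π r * π r * gramSchmidtStep n π r = gramSchmidtStep n π r := by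
  intro r hr
  have hi := hidem r hr
  set L := (((List.range (n - r)).map (fun t => (1:V) - (2:ℚ)⁻¹ • π (n - t))).prod) with hLdef
  set R := (((List.range r).reverse.map (fun t => (1:V) - (2:ℚ)⁻¹ • π t)).prod) with hRdef
  have hg : gramSchmidtStep n π r = L * π r * R := rfl
  have hL : π r * L = π r := by
    apply prod_fix_left
    intro a ha
    simp only [List.mem_map, List.mem_range] at ha
    obtain ⟨t, ht, rfl⟩ := ha
    have h0 : π r * π (n - t) = 0 := horth r hr (n - t) (by omega) (by omega)
    rw [mul_sub, mul_one, mul_smul_comm, h0, smul_zero, sub_zero]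
  have hR : R * π r = π r := by
    apply prod_fix_right
    intro a ha
    simp only [List.mem_map, List.mem_reverse, List.mem_range] at ha
    obtain ⟨t, ht, rfl⟩ := ha
    have h0 : π t * π r = 0 := horth t (by omega) r hr ht
    rw [sub_mul, one_mul, smul_mul_assoc, h0, smul_zero, sub_zero]
  constructor
  · rw [hg]
    simp only [mul_assoc]
    rw [hR, hi, ← mul_assoc, hL, hi]
  · rw [hg]
    simp only [mul_assoc]
    rw [← mul_assoc R (π r), hR, ← mul_assoc (π r) (π r), hi,
      ← mul_assoc (π r) L, hL, ← mul_assoc (π r) (π r), hi]
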